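/- Let B be a Banach space with predual B_*, ν_1,…,ν_n ∈ B_* linearly independent, and y ∈ ℝⁿ \ {0}. If f̂ and ĝ are both solutions of the minimum norm interpolation problem inf{‖f‖_B : ⟨ν_j, f⟩ = y_j ∀j}, then J(f̂) = J(ĝ), where J(f) := {ν ∈ span{ν_1,…,ν_n} : f ∈ ‖ν‖_{B_*} ∂‖·‖_{B_*}(ν)}. -/
import Mathlib


open Pointwise
open scoped Classical

/-- The subdifferential of the dual norm `‖·‖_{B_*}` at `μ ∈ P`, viewed as a
subset of `B = P →L[ℝ] ℝ`: the norming functionals of `μ` for `μ ≠ 0`, and the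
closed unit ball for `μ = 0`. -/
noncomputable def subdiffDualNorm {P : Type*} [NormedAddCommGroup P] [NormedSpace ℝ P]
    (μ : P) : Set (P →L[ℝ] ℝ) :=
  if μ = 0 then Metric.closedBall 0 1 else {w | ‖w‖ = 1 ∧ w μ = ‖μ‖}

lemma mem_smul_subdiff_iff {P : Type*} [NormedAddCommGroup P] [NormedSpace ℝ P]
    {μ : P} (hμ : μ ≠ 0) (f : P →L[ℝ] ℝ) :
    f ∈ ‖μ‖ • subdiffDualNorm μ ↔ ‖f‖ = ‖μ‖ ∧ f μ = ‖μ‖ * ‖μ‖ := by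
  have hμn : ‖μ‖ ≠ 0 := norm_ne_zero_iff.mpr hμ
  rw [subdiffDualNorm, if_neg hμ]
  constructor
  · rintro ⟨w, ⟨hw1, hw2⟩, rfl⟩
    constructor
    · exact (norm_smul (‖μ‖) w).trans (by
        rw [hw1, Real.norm_eq_abs, abs_of_nonneg (norm_nonneg μ), mul_one])
    · show ‖μ‖ * w μ = ‖μ‖ * ‖μ‖
      rw [hw2]
  · rintro ⟨h1, h2⟩
    refine ⟨‖μ‖⁻¹ • f, ⟨?_, ?_⟩, ?_⟩
    · exact (norm_smul (‖μ‖⁻¹) f).trans (by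
        rw [h1, Real.norm_eq_abs, abs_inv, abs_of_nonneg (norm_nonneg μ), inv_mul_cancel₀ hμn])
    · show ‖μ‖⁻¹ * f μ = ‖μ‖
      rw [h2, ← mul_assoc, inv_mul_cancel₀ hμn, one_mul]
    · exact smul_inv_smul₀ hμn f

/-- Any two solutions `f, g` of the MNI problem determine the same set
`J(·) = {ν ∈ span{ν_j} : · ∈ ‖ν‖ ∂‖·‖_{B_*}(ν)}`. -/
theorem stmt_8 {P : Type*} [NormedAddCommGroup P] [NormedSpace ℝ P] [CompleteSpace P]
    {n : ℕ} (ν : Fin n → P) (hν : LinearIndependent ℝ ν)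
    (y : Fin n → ℝ) (hy : y ≠ 0) (f g : P →L[ℝ] ℝ)
    (hfM : ∀ j, f (ν j) = y j) (hgM : ∀ j, g (ν j) = y j)
    (hfmin : ∀ h : P →L[ℝ] ℝ, (∀ j, h (ν j) = y j) → ‖f‖ ≤ ‖h‖)
    (hgmin : ∀ h : P →L[ℝ] ℝ, (∀ j, h (ν j) = y j) → ‖g‖ ≤ ‖h‖) :
    {μ : P | μ ∈ Submodule.span ℝ (Set.range ν) ∧ f ∈ ‖μ‖ • subdiffDualNorm μ} =
    {μ : P | μ ∈ Submodule.span ℝ (Set.range ν) ∧ g ∈ ‖μ‖ • subdiffDualNorm μ} := by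
  have hnorm : ‖f‖ = ‖g‖ := le_antisymm (hfmin g hgM) (hgmin f hfM)
  have hagree : ∀ μ ∈ Submodule.span ℝ (Set.range ν), f μ = g μ := by
    intro μ hμ
    induction hμ using Submodule.span_induction with
    | mem x hx => obtain ⟨j, rfl⟩ := hx; rw [hfM, hgM]
    | zero => simp
    | add a b _ _ ha hb => simp [ha, hb]
    | smul c a _ ha => simp [ha]
  have hf0 : f ≠ 0 := by
    intro h
    apply hy
    funext j
    have := hfM j
    rw [h] at this
    simpa using this.symm
  have hg0 : g ≠ 0 := by
    intro h
    apply hy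
    funext j
    have := hgM j
    rw [h] at this
    simpa using this.symm
  ext μ
  simp only [Set.mem_setOf_eq]
  by_cases hμ : μ = 0
  · subst hμ
    have hz : (‖(0 : P)‖ : ℝ) • subdiffDualNorm (0 : P) = {0} := by
      rw [norm_zero, Set.zero_smul_set ⟨0, by simp [subdiffDualNorm]⟩, ← Set.singleton_zero]
    rw [hz]
    simp only [Set.mem_singleton_iff]
    constructor
    · rintro ⟨-, h⟩; exact absurd h hf0
    · rintro ⟨-, h⟩; exact absurd h hg0
  · rw [mem_smul_subdiff_iff hμ f, mem_smul_subdiff_iff hμ g]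
    constructor
    · rintro ⟨hs, h1, h2⟩
      exact ⟨hs, hnorm ▸ h1, (hagree μ hs) ▸ h2⟩
    · rintro ⟨hs, h1, h2⟩
      exact ⟨hs, hnorm.symm ▸ h1, (hagree μ hs).symm ▸ h2⟩
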